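/- Let G be a group whose commutator subgroup G' = [G,G] is finite. Then for all g, h ∈ G there exists a positive integer n such that g·hⁿ = hⁿ·g; that is, G satisfies condition (2). -/

import Mathlib

theorem cond2_of_finite_commutator (G : Type*) [Group G]
    (hfin : Finite (commutator G)) :
    ∀ g h : G, ∃ n : ℕ, 0 < n ∧ g * h ^ n = h ^ n * g := by
  intro g h
  open scoped commutatorElement in
  have key : ∃ m n : ℕ, m < n ∧ ⁅g, h ^ m⁆ = ⁅g, h ^ n⁆ := by
    have : ¬ Function.Injective (fun n : ℕ =>
        (⟨⁅g, h ^ n⁆, Subgroup.commutator_mem_commutator (Subgroup.mem_top g)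
          (Subgroup.mem_top (h ^ n))⟩ : commutator G)) := by
      intro hinj
      exact (Finite.of_injective _ hinj).not_infinite instInfiniteNat
    rw [Function.not_injective_iff] at this
    obtain ⟨a, b, hab, hne⟩ := this
    rcases hne.lt_or_gt with hlt | hlt
    · exact ⟨a, b, hlt, congrArg Subtype.val hab⟩
    · exact ⟨b, a, hlt, congrArg Subtype.val hab.symm⟩
  obtain ⟨m, n, hmn, heq⟩ := key
  refine ⟨n - m, Nat.sub_pos_of_lt hmn, ?_⟩
  have hn : h ^ n = h ^ m * h ^ (n - m) := by
    rw [← pow_add, Nat.add_sub_cancel' hmn.le]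
  simp only [commutatorElement_def, hn] at heq
  set a := h ^ m with ha
  set b := h ^ (n - m) with hb
  -- heq : g * a * g⁻¹ * a⁻¹ = g * (a * b) * g⁻¹ * (a * b)⁻¹
  have e1 : g * a * g⁻¹ = g * a * b * g⁻¹ * b⁻¹ :=
    mul_right_cancel (b := a⁻¹) (by rw [heq]; group)
  have e2 : g⁻¹ = b * g⁻¹ * b⁻¹ :=
    mul_left_cancel (a := g * a) (by rw [← mul_assoc, e1]; group)
  have e3 : g⁻¹ * b = b * g⁻¹ := by
    calc g⁻¹ * b = b * g⁻¹ * b⁻¹ * b := by rw [← e2]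
      _ = b * g⁻¹ := by group
  calc g * b = g * (b * g⁻¹) * g := by group
    _ = g * (g⁻¹ * b) * g := by rw [e3]
    _ = b * g := by group
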